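/- Let Q0, Q1 be probability distributions on a finite alphabet Z with supp(Q0) = Z, and let Q_γ = (1−γ)Q0 + γQ1 for γ ∈ [0,1]. If γ_n → 0, then for all sufficiently large n, (γ_n²/2)·χ²(Q1‖Q0)·(1−√γ_n) ≤ D(Q_{γ_n}‖Q0) ≤ (γ_n²/2)·χ²(Q1‖Q0)·(1+√γ_n). -/

import Mathlib

open Finset

/-- Kullback–Leibler divergence between two distributions on a finite alphabet. -/
noncomputable def klDiv {Z : Type*} [Fintype Z] (p q : Z → ℝ) : ℝ :=
  ∑ z, p z * Real.log (p z / q z)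

/-- Chi-squared distance `χ²(Q1‖Q0)`. -/
noncomputable def chiSq {Z : Type*} [Fintype Z] (q1 q0 : Z → ℝ) : ℝ :=
  ∑ z, (q1 z - q0 z) ^ 2 / q0 z


private lemma hasDerivAt_main (x : ℝ) (hx : 0 < 1 + x) :
    HasDerivAt (fun t : ℝ => (1 + t) * Real.log (1 + t) - t - t ^ 2 / 2 + t ^ 3)
      (Real.log (1 + x) - x + 3 * x ^ 2) x := by
  have h1 : HasDerivAt (fun t : ℝ => 1 + t) 1 x := (hasDerivAt_id x).const_add 1
  have h2 : HasDerivAt (fun t : ℝ => Real.log (1 + t)) (1 / (1 + x)) x := by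
    simpa [Function.comp_def] using (Real.hasDerivAt_log hx.ne').comp x h1
  have h3 := h1.mul h2
  have h4 : HasDerivAt (fun t : ℝ => t ^ 2 / 2) x x := by
    simpa using (hasDerivAt_pow 2 x).div_const 2
  have h5 : HasDerivAt (fun t : ℝ => t ^ 3) (3 * x ^ 2) x := by
    simpa using hasDerivAt_pow 3 x
  have h6 := ((h3.sub (hasDerivAt_id x)).sub h4).add h5
  refine h6.congr_deriv ?_
  rw [mul_one_div_cancel hx.ne']; ring

private lemma hasDerivAt_g (x : ℝ) (hx : 0 < 1 + x) :
    HasDerivAt (fun t : ℝ => (1 + t) * Real.log (1 + t) - t - t ^ 2 / 2)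
      (Real.log (1 + x) - x) x := by
  have h1 : HasDerivAt (fun t : ℝ => 1 + t) 1 x := (hasDerivAt_id x).const_add 1
  have h2 : HasDerivAt (fun t : ℝ => Real.log (1 + t)) (1 / (1 + x)) x := by
    simpa [Function.comp_def] using (Real.hasDerivAt_log hx.ne').comp x h1
  have h3 := h1.mul h2
  have h4 : HasDerivAt (fun t : ℝ => t ^ 2 / 2) x x := by
    simpa using (hasDerivAt_pow 2 x).div_const 2
  have h6 := (h3.sub (hasDerivAt_id x)).sub h4
  refine h6.congr_deriv ?_
  rw [mul_one_div_cancel hx.ne']; ring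

private lemma g_abs_le (x : ℝ) (h1 : -(1/2) ≤ x) (h2 : x ≤ 1/2) :
    |(1 + x) * Real.log (1 + x) - x - x ^ 2 / 2| ≤ |x| ^ 3 := by
  have hxpos : ∀ t : ℝ, t ∈ Set.Icc (-(1/2) : ℝ) (1/2) → (0:ℝ) < 1 + t := by
    intro t ht; simp only [Set.mem_Icc] at ht; linarith [ht.1]
  -- g is antitone on the interval
  set g : ℝ → ℝ := fun t => (1 + t) * Real.log (1 + t) - t - t ^ 2 / 2 with hg
  set ψ : ℝ → ℝ := fun t => (1 + t) * Real.log (1 + t) - t - t ^ 2 / 2 + t ^ 3 with hψ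
  have hganti : AntitoneOn g (Set.Icc (-(1/2) : ℝ) (1/2)) := by
    apply AntitoneOn.mono (antitoneOn_of_deriv_nonpos (convex_Icc _ _) ?_ ?_ ?_) le_rfl
    · intro t ht
      exact ((hasDerivAt_g t (hxpos t ht)).continuousAt).continuousWithinAt
    · intro t ht
      rw [interior_Icc] at ht
      exact (hasDerivAt_g t (hxpos t (Set.mem_Icc_of_Ioo ht))).differentiableAt.differentiableWithinAt
    · intro t ht
      rw [interior_Icc] at ht
      have h0 := hxpos t (Set.mem_Icc_of_Ioo ht)
      rw [(hasDerivAt_g t h0).deriv]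
      have := Real.log_le_sub_one_of_pos h0
      linarith
  have hψmono : MonotoneOn ψ (Set.Icc (-(1/2) : ℝ) (1/2)) := by
    apply monotoneOn_of_deriv_nonneg (convex_Icc _ _)
    · intro t ht
      exact ((hasDerivAt_main t (hxpos t ht)).continuousAt).continuousWithinAt
    · intro t ht
      rw [interior_Icc] at ht
      exact (hasDerivAt_main t (hxpos t (Set.mem_Icc_of_Ioo ht))).differentiableAt.differentiableWithinAt
    · intro t ht
      rw [interior_Icc] at ht
      have h0 := hxpos t (Set.mem_Icc_of_Ioo ht)
      rw [(hasDerivAt_main t h0).deriv]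
      have hlog : 1 - (1 + t)⁻¹ ≤ Real.log (1 + t) := Real.one_sub_inv_le_log_of_pos h0
      have hinv : (1 + t)⁻¹ ≤ 2 := by
        rw [inv_le_comm₀ h0 (by norm_num)]
        simp only [Set.mem_Ioo] at ht
        linarith [ht.1]
      have key : 1 - (1 + t)⁻¹ - t = -t ^ 2 * (1 + t)⁻¹ := by
        field_simp
        ring
      nlinarith [sq_nonneg t, mul_le_mul_of_nonneg_left hinv (sq_nonneg t), key]
  have hmem : x ∈ Set.Icc (-(1/2) : ℝ) (1/2) := ⟨h1, h2⟩
  have h0mem : (0:ℝ) ∈ Set.Icc (-(1/2) : ℝ) (1/2) := by norm_num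
  have hg0 : g 0 = 0 := by simp [hg]
  have hψ0 : ψ 0 = 0 := by simp [hψ]
  rcases le_or_gt 0 x with hx0 | hx0
  · have hgle : g x ≤ 0 := hg0 ▸ hganti h0mem hmem hx0
    have hψge : 0 ≤ ψ x := hψ0 ▸ hψmono h0mem hmem hx0
    rw [abs_of_nonpos hgle, abs_of_nonneg hx0]
    simp only [hψ, hg] at *
    linarith
  · have hgge : 0 ≤ g x := hg0 ▸ hganti hmem h0mem hx0.le
    have hψle : ψ x ≤ 0 := hψ0 ▸ hψmono hmem h0mem hx0.le
    rw [abs_of_nonneg hgge, abs_of_neg hx0]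
    simp only [hψ, hg] at *
    nlinarith


/-- Bloch's two-sided approximation of `D(Q_{γₙ}‖Q0)` for `γₙ → 0`. -/
theorem stmt2 {Z : Type*} [Fintype Z] (Q0 Q1 : Z → ℝ)
    (hQ0pos : ∀ z, 0 < Q0 z) (hQ0sum : ∑ z, Q0 z = 1)
    (hQ1nn : ∀ z, 0 ≤ Q1 z) (hQ1sum : ∑ z, Q1 z = 1)
    (γ : ℕ → ℝ) (hγmem : ∀ n, γ n ∈ Set.Icc (0 : ℝ) 1)
    (hγ0 : Filter.Tendsto γ Filter.atTop (nhds 0)) :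
    ∀ᶠ n in Filter.atTop,
      (γ n) ^ 2 / 2 * chiSq Q1 Q0 * (1 - Real.sqrt (γ n)) ≤
        klDiv (fun z => (1 - γ n) * Q0 z + γ n * Q1 z) Q0 ∧
      klDiv (fun z => (1 - γ n) * Q0 z + γ n * Q1 z) Q0 ≤
        (γ n) ^ 2 / 2 * chiSq Q1 Q0 * (1 + Real.sqrt (γ n)) := by
  classical
  -- the ratio function
  set r : Z → ℝ := fun z => (Q1 z - Q0 z) / Q0 z with hr
  -- a uniform bound on |r|
  obtain ⟨M, hM0, hM⟩ : ∃ M : ℝ, 0 ≤ M ∧ ∀ z, |r z| ≤ M := by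
    rcases isEmpty_or_nonempty Z with h | h
    · exact ⟨0, le_rfl, fun z => (IsEmpty.false z).elim⟩
    · refine ⟨Finset.univ.sup' ⟨Classical.arbitrary Z, Finset.mem_univ _⟩ (fun z => |r z|), ?_, ?_⟩
      · exact le_trans (abs_nonneg _)
          (Finset.le_sup' (fun z => |r z|) (Finset.mem_univ (Classical.arbitrary Z)))
      · exact fun z => Finset.le_sup' (fun z => |r z|) (Finset.mem_univ z)
  have hsqrt0 : Filter.Tendsto (fun n => Real.sqrt (γ n)) Filter.atTop (nhds 0) := by
    have := hγ0.sqrt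
    simpa using this
  have hev : ∀ᶠ n in Filter.atTop, Real.sqrt (γ n) * (M + 1) ≤ 1 / 2 := by
    have hpos : (0:ℝ) < 1 / (2 * (M + 1)) := by positivity
    filter_upwards [hsqrt0.eventually_le_const hpos] with n hn
    have h1 : Real.sqrt (γ n) * (M + 1) ≤ 1 / (2 * (M + 1)) * (M + 1) :=
      mul_le_mul_of_nonneg_right hn (by positivity)
    have h2 : 1 / (2 * (M + 1)) * (M + 1) = 1 / 2 := by
      field_simp
    linarith
  filter_upwards [hev] with n hn
  obtain ⟨hγnn, hγle1⟩ := hγmem n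
  set c := γ n with hc
  set s := Real.sqrt c with hs
  have hsnn : 0 ≤ s := Real.sqrt_nonneg c
  have hs2 : s ^ 2 = c := Real.sq_sqrt hγnn
  have hsle : s ≤ 1 := by
    rw [hs, show (1:ℝ) = Real.sqrt 1 by simp]
    exact Real.sqrt_le_sqrt hγle1
  -- per-point facts
  have hQ0ne : ∀ z, Q0 z ≠ 0 := fun z => (hQ0pos z).ne'
  set x : Z → ℝ := fun z => c * r z with hx
  have hxabs : ∀ z, |x z| ≤ s * (1 / 2) := by
    intro z
    have h1 : |x z| = c * |r z| := by
      rw [hx]; simp [abs_mul, abs_of_nonneg hγnn]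
    have h2 : c * |r z| ≤ c * (M + 1) := by
      apply mul_le_mul_of_nonneg_left _ hγnn
      linarith [hM z]
    have h3 : c * (M + 1) = s * (s * (M + 1)) := by rw [← hs2]; ring
    calc |x z| = c * |r z| := h1
      _ ≤ c * (M + 1) := h2
      _ = s * (s * (M + 1)) := h3
      _ ≤ s * (1 / 2) := mul_le_mul_of_nonneg_left hn hsnn
  have hxhalf : ∀ z, |x z| ≤ 1 / 2 := by
    intro z
    calc |x z| ≤ s * (1/2) := hxabs z
      _ ≤ 1 * (1/2) := by nlinarith
      _ = 1/2 := by ring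
  -- rewrite the mixture
  have hmix : ∀ z, (1 - c) * Q0 z + c * Q1 z = Q0 z * (1 + x z) := by
    intro z
    rw [hx, hr]
    field_simp [hQ0ne z]
    ring
  have h1x : ∀ z, 0 < 1 + x z := by
    intro z
    have := abs_le.mp (hxhalf z)
    linarith [this.1]
  -- KL divergence in terms of x
  have hkl : klDiv (fun z => (1 - c) * Q0 z + c * Q1 z) Q0
      = ∑ z, Q0 z * ((1 + x z) * Real.log (1 + x z)) := by
    unfold klDiv
    apply Finset.sum_congr rfl
    intro z _
    show ((1 - c) * Q0 z + c * Q1 z) * Real.log (((1 - c) * Q0 z + c * Q1 z) / Q0 z)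
      = Q0 z * ((1 + x z) * Real.log (1 + x z))
    have hq : ((1 - c) * Q0 z + c * Q1 z) / Q0 z = 1 + x z := by
      rw [hmix z, mul_comm, mul_div_assoc, div_self (hQ0ne z), mul_one]
    rw [hq, hmix z]
    ring
  -- first moment vanishes
  have hsum1 : ∑ z, Q0 z * x z = 0 := by
    have : ∀ z, Q0 z * x z = c * (Q1 z - Q0 z) := by
      intro z; rw [hx, hr]; field_simp [hQ0ne z]
    rw [Finset.sum_congr rfl (fun z _ => this z), ← Finset.mul_sum,
      Finset.sum_sub_distrib, hQ1sum, hQ0sum]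
    ring
  -- second moment gives chi-squared
  have hsum2 : ∑ z, Q0 z * (x z) ^ 2 = c ^ 2 * chiSq Q1 Q0 := by
    unfold chiSq
    rw [Finset.mul_sum]
    apply Finset.sum_congr rfl
    intro z _
    rw [hx, hr]
    field_simp [hQ0ne z]
  -- the key estimate
  have hkey : |klDiv (fun z => (1 - c) * Q0 z + c * Q1 z) Q0 - c ^ 2 / 2 * chiSq Q1 Q0|
      ≤ c ^ 2 / 2 * chiSq Q1 Q0 * s := by
    have hdiff : klDiv (fun z => (1 - c) * Q0 z + c * Q1 z) Q0 - c ^ 2 / 2 * chiSq Q1 Q0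
        = ∑ z, Q0 z * ((1 + x z) * Real.log (1 + x z) - x z - (x z) ^ 2 / 2) := by
      rw [hkl]
      have : ∀ z, Q0 z * ((1 + x z) * Real.log (1 + x z) - x z - (x z) ^ 2 / 2)
          = Q0 z * ((1 + x z) * Real.log (1 + x z)) - Q0 z * x z - Q0 z * (x z)^2 / 2 := by
        intro z; ring
      rw [Finset.sum_congr rfl (fun z _ => this z), Finset.sum_sub_distrib,
        Finset.sum_sub_distrib, hsum1]
      have : ∑ z, Q0 z * x z ^ 2 / 2 = (∑ z, Q0 z * x z ^ 2) / 2 := by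
        rw [Finset.sum_div]
      rw [this, hsum2]
      ring
    rw [hdiff]
    calc |∑ z, Q0 z * ((1 + x z) * Real.log (1 + x z) - x z - (x z) ^ 2 / 2)|
        ≤ ∑ z, |Q0 z * ((1 + x z) * Real.log (1 + x z) - x z - (x z) ^ 2 / 2)| :=
          Finset.abs_sum_le_sum_abs _ _
      _ ≤ ∑ z, Q0 z * (s / 2 * (x z) ^ 2) := by
          apply Finset.sum_le_sum
          intro z _
          rw [abs_mul, abs_of_pos (hQ0pos z)]
          apply mul_le_mul_of_nonneg_left _ (hQ0pos z).le
          have hb := g_abs_le (x z) (by linarith [(abs_le.mp (hxhalf z)).1])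
            (by linarith [(abs_le.mp (hxhalf z)).2])
          calc |(1 + x z) * Real.log (1 + x z) - x z - (x z) ^ 2 / 2| ≤ |x z| ^ 3 := hb
            _ = |x z| * |x z| ^ 2 := by ring
            _ ≤ (s * (1/2)) * |x z| ^ 2 := by
                apply mul_le_mul_of_nonneg_right (hxabs z) (by positivity)
            _ = s / 2 * (x z) ^ 2 := by rw [sq_abs]; ring
      _ = s / 2 * ∑ z, Q0 z * (x z) ^ 2 := by
          rw [Finset.mul_sum]
          apply Finset.sum_congr rfl
          intro z _; ring
      _ = c ^ 2 / 2 * chiSq Q1 Q0 * s := by rw [hsum2]; ring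
  have := abs_le.mp hkey
  constructor
  · nlinarith [this.1]
  · nlinarith [this.2]
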